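/- arXiv:2003.02727 — 3 statements merged into one kernel-verified Lean document; each statement's English description precedes it below -/
import Mathlib

section
/- Let d ≥ 2 be an integer and let Z be a finite set of pairwise non-proportional nonzero vectors in ℂ³ such that the only homogeneous polynomial of degree d in ℂ[x₀,x₁,x₂] vanishing at every element of Z is the zero polynomial. Then for every p ∈ Z, the only homogeneous polynomial of degree d−2 vanishing at every element of Z \ {p} is the zero polynomial. -/
/-- Two vectors are proportional if one is a scalar multiple of the other. -/
def PairwiseNonProportional (S : Finset (Fin 3 → ℂ)) : Prop :=
  ∀ u ∈ S, ∀ v ∈ S, u ≠ v → ∀ c : ℂ, v ≠ c • u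

/-- Lemma 3.4 (reduced case): if no nonzero degree-`d` form vanishes on `Z`, then for
every `p ∈ Z` no nonzero degree-`(d-2)` form vanishes on `Z \ {p}`. -/
theorem no_form_on_erase_of_no_form (d : ℕ) (hd : 2 ≤ d) (Z : Finset (Fin 3 → ℂ))
    (hZ0 : ∀ v ∈ Z, v ≠ 0) (hZp : PairwiseNonProportional Z)
    (hZ : ∀ f : MvPolynomial (Fin 3) ℂ,
      f ∈ MvPolynomial.homogeneousSubmodule (Fin 3) ℂ d →
      (∀ v ∈ Z, MvPolynomial.eval v f = 0) → f = 0) :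
    ∀ p ∈ Z, ∀ f : MvPolynomial (Fin 3) ℂ,
      f ∈ MvPolynomial.homogeneousSubmodule (Fin 3) ℂ (d - 2) →
      (∀ v ∈ Z.erase p, MvPolynomial.eval v f = 0) → f = 0 := by
  intro p hp f hf hvan
  -- choose a coordinate i with p i ≠ 0
  have hp0 : p ≠ 0 := hZ0 p hp
  obtain ⟨i, hi⟩ : ∃ i, p i ≠ 0 := by
    by_contra h
    push_neg at h
    exact hp0 (funext h)
  -- choose j ≠ i
  obtain ⟨j, hj⟩ : ∃ j : Fin 3, j ≠ i := by
    fin_cases i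
    · exact ⟨1, by decide⟩
    · exact ⟨0, by decide⟩
    · exact ⟨0, by decide⟩
  -- the linear form L = p i * X j - p j * X i vanishes at p and is nonzero
  set L : MvPolynomial (Fin 3) ℂ :=
    MvPolynomial.C (p i) * MvPolynomial.X j - MvPolynomial.C (p j) * MvPolynomial.X i with hL
  have hLhom : L.IsHomogeneous 1 := by
    apply MvPolynomial.IsHomogeneous.sub
    · simpa using (MvPolynomial.isHomogeneous_C (Fin 3) (p i)).mul
        (MvPolynomial.isHomogeneous_X ℂ j)
    · simpa using (MvPolynomial.isHomogeneous_C (Fin 3) (p j)).mul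
        (MvPolynomial.isHomogeneous_X ℂ i)
  have hLp : MvPolynomial.eval p L = 0 := by
    simp [hL, mul_comm]
  have hLne : L ≠ 0 := by
    intro h0
    have := congrArg (MvPolynomial.eval (Pi.single j (1 : ℂ))) h0
    simp [hL, Pi.single_apply, hj.symm] at this
    exact hi this
  -- g = f * L * L is homogeneous of degree d and vanishes on Z
  have hghom : (f * L * L).IsHomogeneous d := by
    have hf' : f.IsHomogeneous (d - 2) := (MvPolynomial.mem_homogeneousSubmodule _ _).mp hf
    have := (hf'.mul hLhom).mul hLhom
    have hdd : d - 2 + 1 + 1 = d := by omega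
    rwa [hdd] at this
  have hgzero : f * L * L = 0 := by
    apply hZ _ ((MvPolynomial.mem_homogeneousSubmodule _ _).mpr hghom)
    intro v hv
    by_cases hvp : v = p
    · subst hvp; simp [hLp]
    · have : MvPolynomial.eval v f = 0 := hvan v (Finset.mem_erase.mpr ⟨hvp, hv⟩)
      simp [this]
  rcases mul_eq_zero.mp hgzero with h | h
  · rcases mul_eq_zero.mp h with h' | h'
    · exact h'
    · exact absurd h' hLne
  · exact absurd h hLne
end

section
/- Let F be a nonzero homogeneous polynomial of degree e in ℂ[x₀,x₁,x₂], let S be a finite set of nonzero vectors in ℂ³ at each of which F vanishes, let p ∈ ℂ³ be a nonzero vector with F(p) ≠ 0, and let m be a natural number. Then the complex vector space of homogeneous polynomials of degree e+m vanishing at p and at every element of S has dimension at least (m+1)(m+2)/2 − 1. -/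
set_option linter.unusedVariables false

/-- The space of homogeneous polynomials of degree `d` in three variables vanishing at
every point of `S`. -/
noncomputable def vanishingForms (d : ℕ) (S : Set (Fin 3 → ℂ)) :
    Submodule ℂ (MvPolynomial (Fin 3) ℂ) :=
  MvPolynomial.homogeneousSubmodule (Fin 3) ℂ d ⊓
    ⨅ v ∈ S, LinearMap.ker (MvPolynomial.aeval (R := ℂ) v).toLinearMap


open MvPolynomial

/-- Exponent vectors of degree `n` correspond to multisets of size `n`. -/
noncomputable def degEquiv (n : ℕ) :
    {d : Fin 3 →₀ ℕ // d.degree = n} ≃ Sym (Fin 3) n :=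
  Equiv.subtypeEquiv Multiset.toFinsupp.symm.toEquiv (fun d => by
    simp [Sym, Finsupp.degree_apply, Finsupp.card_toMultiset, Finsupp.sum])

lemma nat_card_degSet (n : ℕ) :
    Nat.card {d : Fin 3 →₀ ℕ // d.degree = n} = (n + 1) * (n + 2) / 2 := by
  rw [Nat.card_congr (degEquiv n), Nat.card_eq_fintype_card,
    Sym.card_sym_eq_choose]
  have h1 : 3 + n - 1 = n + 2 := by omega
  have h2 : (n + 2) - n = 2 := by omega
  simp only [Fintype.card_fin]
  rw [h1, ← Nat.choose_symm (by omega : n ≤ n + 2), h2, Nat.choose_two_right]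
  have h3 : n + 2 - 1 = n + 1 := rfl
  rw [h3, Nat.mul_comm]

lemma finite_degSet (n : ℕ) : {d : Fin 3 →₀ ℕ | d.degree = n}.Finite := by
  have : Finite {d : Fin 3 →₀ ℕ // d.degree = n} :=
    Finite.of_equiv _ (degEquiv n).symm
  exact Set.finite_coe_iff.mp this

lemma homog_eq_restrict (n : ℕ) :
    homogeneousSubmodule (Fin 3) ℂ n =
      restrictSupport ℂ {d : Fin 3 →₀ ℕ | d.degree = n} :=
  homogeneousSubmodule_eq_finsupp_supported (Fin 3) ℂ n

instance homog_fd (n : ℕ) :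
    FiniteDimensional ℂ (homogeneousSubmodule (Fin 3) ℂ n) := by
  rw [homog_eq_restrict]
  have := (finite_degSet n).to_subtype
  exact Module.Finite.of_basis
    (basisRestrictSupport ℂ {d : Fin 3 →₀ ℕ | d.degree = n})

lemma finrank_homog (n : ℕ) :
    Module.finrank ℂ (homogeneousSubmodule (Fin 3) ℂ n) =
      (n + 1) * (n + 2) / 2 := by
  classical
  rw [homog_eq_restrict]
  have := (finite_degSet n).fintype
  rw [Module.finrank_eq_card_basis
    (basisRestrictSupport ℂ {d : Fin 3 →₀ ℕ | d.degree = n}),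
    ← Nat.card_eq_fintype_card]
  exact nat_card_degSet n

theorem finrank_vanishingForms_ge' (e m : ℕ) (F : MvPolynomial (Fin 3) ℂ)
    (hF : F ∈ MvPolynomial.homogeneousSubmodule (Fin 3) ℂ e) (hF0 : F ≠ 0)
    (S : Finset (Fin 3 → ℂ)) (hS0 : ∀ v ∈ S, v ≠ 0)
    (hSF : ∀ v ∈ S, MvPolynomial.eval v F = 0)
    (p : Fin 3 → ℂ) (hp0 : p ≠ 0) (hpF : MvPolynomial.eval p F ≠ 0) :
    (m + 1) * (m + 2) / 2 - 1 ≤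
      Module.finrank ℂ (MvPolynomial.homogeneousSubmodule (Fin 3) ℂ (e+m) ⊓
        ⨅ v ∈ (insert p ↑S : Set (Fin 3 → ℂ)),
          LinearMap.ker (MvPolynomial.aeval (R := ℂ) v).toLinearMap : Submodule ℂ _) := by
  classical
  set V := homogeneousSubmodule (Fin 3) ℂ m with hV
  set T : Submodule ℂ (MvPolynomial (Fin 3) ℂ) :=
    (MvPolynomial.homogeneousSubmodule (Fin 3) ℂ (e+m) ⊓
      ⨅ v ∈ (insert p ↑S : Set (Fin 3 → ℂ)),
        LinearMap.ker (MvPolynomial.aeval (R := ℂ) v).toLinearMap) with hT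
  let φ : V →ₗ[ℂ] ℂ := (MvPolynomial.aeval (R := ℂ) p).toLinearMap.comp V.subtype
  have haev : ∀ (v : Fin 3 → ℂ) (q : MvPolynomial (Fin 3) ℂ),
      MvPolynomial.aeval (R := ℂ) v q = MvPolynomial.eval v q := by
    intro v q
    rw [MvPolynomial.aeval_def, Algebra.algebraMap_self]
    rfl
  have hmem : ∀ g : LinearMap.ker φ, (F * (g : V).1) ∈ T := by
    intro g
    refine Submodule.mem_inf.mpr ⟨hF.mul (g : V).2, ?_⟩
    rw [Submodule.mem_iInf]
    intro v
    rw [Submodule.mem_iInf]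
    intro hv
    rw [LinearMap.mem_ker, AlgHom.toLinearMap_apply, map_mul]
    rcases Set.mem_insert_iff.mp hv with hv | hv
    · subst hv
      have hg0 := LinearMap.mem_ker.mp g.2
      have hg : MvPolynomial.aeval (R := ℂ) v
          (((g : V) : MvPolynomial (Fin 3) ℂ)) = 0 := hg0
      rw [hg, mul_zero]
    · rw [haev, hSF v hv, zero_mul]
  let L : LinearMap.ker φ →ₗ[ℂ] T :=
    { toFun := fun g => ⟨F * (g : V).1, hmem g⟩
      map_add' := fun a b => by
        ext
        simp [mul_add]
      map_smul' := fun c a => by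
        ext
        simp [mul_smul_comm] }
  have hinj : Function.Injective L := by
    intro a b hab
    have h1 : F * (a : V).1 = F * (b : V).1 := congrArg Subtype.val hab
    have h2 := mul_left_cancel₀ hF0 h1
    exact Subtype.ext (Subtype.ext h2)
  have hfdT : FiniteDimensional ℂ T := by
    have hle : T ≤ homogeneousSubmodule (Fin 3) ℂ (e + m) := inf_le_left
    exact Submodule.finiteDimensional_of_le hle
  have h1 : Module.finrank ℂ (LinearMap.ker φ) ≤ Module.finrank ℂ T :=
    LinearMap.finrank_le_finrank_of_injective hinj
  have h2 := LinearMap.finrank_range_add_finrank_ker φ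
  have h3 : Module.finrank ℂ (LinearMap.range φ) ≤ 1 := by
    simpa using Submodule.finrank_le (LinearMap.range φ)
  have h4 : Module.finrank ℂ V = (m + 1) * (m + 2) / 2 := finrank_homog m
  omega


/-- If a nonzero degree-`e` form `F` vanishes on `S` but not at `p`, then the space of
degree-`(e+m)` forms vanishing at `p` and on `S` has dimension at least
`(m+1)(m+2)/2 - 1`. -/
theorem finrank_vanishingForms_ge (e m : ℕ) (F : MvPolynomial (Fin 3) ℂ)
    (hF : F ∈ MvPolynomial.homogeneousSubmodule (Fin 3) ℂ e) (hF0 : F ≠ 0)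
    (S : Finset (Fin 3 → ℂ)) (hS0 : ∀ v ∈ S, v ≠ 0)
    (hSF : ∀ v ∈ S, MvPolynomial.eval v F = 0)
    (p : Fin 3 → ℂ) (hp0 : p ≠ 0) (hpF : MvPolynomial.eval p F ≠ 0) :
    (m + 1) * (m + 2) / 2 - 1 ≤
      Module.finrank ℂ (vanishingForms (e + m) (insert p ↑S)) := by
  unfold vanishingForms
  exact finrank_vanishingForms_ge' e m F hF hF0 S hS0 hSF p hp0 hpF
end

section
/- Let k ≥ 2 and c₂ be integers with c₂ ≥ k² + k. Then there exists a set Z of c₂ + k² pairwise non-proportional nonzero vectors in ℂ³ such that (i) the only homogeneous polynomial of degree 2k − 1 in ℂ[x₀,x₁,x₂] vanishing at every element of Z is zero, and (ii) for every p ∈ Z, the only homogeneous polynomial of degree 2k − 3 vanishing at every element of Z \ {p} is zero. -/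
open Polynomial Finset

noncomputable section CayleyBacharachAux

/-- Dehomogenization map: x₀ ↦ 1, x₁ ↦ y (inner var), x₂ ↦ z (outer var). -/
def deh : MvPolynomial (Fin 3) ℂ →+* Polynomial (Polynomial ℂ) :=
  MvPolynomial.eval₂Hom (Polynomial.C.comp Polynomial.C)
    ![1, Polynomial.C Polynomial.X, Polynomial.X]

lemma deh_eval (f : MvPolynomial (Fin 3) ℂ) (a c : ℂ) :
    ((deh f).eval (Polynomial.C c)).eval a = MvPolynomial.eval ![1, a, c] f := by
  induction f using MvPolynomial.induction_on with
  | C r => simp [deh]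
  | add p q hp hq => simp [map_add, hp, hq]
  | mul_X p i hp =>
      have : ((deh (MvPolynomial.X i)).eval (Polynomial.C c)).eval a
          = (![1, a, c] : Fin 3 → ℂ) i := by
        fin_cases i <;> simp [deh]
      simp [map_mul, hp, this]

lemma deh_monomial (m : Fin 3 →₀ ℕ) (c : ℂ) :
    deh (MvPolynomial.monomial m c)
      = Polynomial.monomial (m 2) (Polynomial.C c * Polynomial.X ^ (m 1)) := by
  rw [MvPolynomial.monomial_eq]
  have hprod : (m.prod fun n e => (MvPolynomial.X n : MvPolynomial (Fin 3) ℂ) ^ e)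
      = (MvPolynomial.X 0) ^ (m 0) * (MvPolynomial.X 1) ^ (m 1) * (MvPolynomial.X 2) ^ (m 2) := by
    rw [Finsupp.prod_fintype]
    · exact Fin.prod_univ_three _
    · simp
  have h0 : deh (MvPolynomial.X 0) = 1 := by simp [deh]
  have h1 : deh (MvPolynomial.X 1) = Polynomial.C Polynomial.X := by simp [deh]
  have h2 : deh (MvPolynomial.X 2) = Polynomial.X := by simp [deh]
  have hC : deh (MvPolynomial.C c) = Polynomial.C (Polynomial.C c) := by simp [deh]
  rw [map_mul, hC, hprod, map_mul, map_mul, map_pow, map_pow, map_pow, h0, h1, h2,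
    one_pow, one_mul, ← Polynomial.C_pow, ← Polynomial.C_mul_X_pow_eq_monomial, map_mul, mul_assoc]

lemma deh_tdeg {f : MvPolynomial (Fin 3) ℂ} {e : ℕ} (h : f.totalDegree ≤ e) (i : ℕ)
    (hne : (deh f).coeff i ≠ 0) : ((deh f).coeff i).natDegree + i ≤ e := by
  have hsum : ∀ m ∈ f.support, m 0 + m 1 + m 2 ≤ e := by
    intro m hm
    have h1 : (m.sum fun _ e => e) ≤ f.totalDegree := MvPolynomial.le_totalDegree hm
    have h2 : (m.sum fun _ e => e) = m 0 + m 1 + m 2 := by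
      rw [Finsupp.sum_fintype]
      · exact Fin.sum_univ_three _
      · simp
    omega
  have hrepr : deh f = ∑ m ∈ f.support,
      Polynomial.monomial (m 2) (Polynomial.C (f.coeff m) * Polynomial.X ^ (m 1)) := by
    conv_lhs => rw [f.as_sum, map_sum]
    exact Finset.sum_congr rfl fun m _ => deh_monomial m _
  have hcoeff : (deh f).coeff i = ∑ m ∈ f.support,
      (Polynomial.monomial (m 2) (Polynomial.C (f.coeff m) * Polynomial.X ^ (m 1))).coeff i := by
    rw [hrepr, Polynomial.finset_sum_coeff]
  by_cases hi : i ≤ e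
  · have : ((deh f).coeff i).natDegree ≤ e - i := by
      rw [hcoeff]
      apply Polynomial.natDegree_sum_le_of_forall_le
      intro m hm
      rw [Polynomial.coeff_monomial]
      by_cases h2 : m 2 = i
      · simp only [h2, if_pos rfl]
        refine le_trans (Polynomial.natDegree_mul_le) ?_
        have := hsum m hm
        simp only [Polynomial.natDegree_C, Polynomial.natDegree_pow, Polynomial.natDegree_X]
        omega
      · rw [if_neg h2]; simp
    omega
  · exfalso; apply hne
    rw [hcoeff]
    apply Finset.sum_eq_zero
    intro m hm
    have h2 : m 2 ≠ i := by have := hsum m hm; omega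
    rw [Polynomial.coeff_monomial, if_neg h2]

lemma rows_lemma : ∀ (n m : ℕ) (g : Polynomial (Polynomial ℂ)) (A : ℕ → Finset ℂ),
    (∀ i, g.coeff i ≠ 0 → (g.coeff i).natDegree + i ≤ n) →
    (∀ j, j ≤ n → n + 1 ≤ (A (m + j)).card + j) →
    (∀ j, j ≤ n → ∀ a ∈ A (m + j),
      ((g.eval (Polynomial.C ((m + j : ℕ) : ℂ))).eval a = 0)) →
    g = 0 := by
  intro n
  induction n with
  | zero =>
      intro m g A hdeg hcard hval
      have hgd : g.natDegree ≤ 0 := by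
        apply Polynomial.natDegree_le_iff_coeff_eq_zero.2
        intro i hi
        by_contra hne
        have := hdeg i hne
        omega
      have h1 : g = Polynomial.C (g.coeff 0) := Polynomial.eq_C_of_natDegree_le_zero hgd
      have hq : (g.coeff 0).natDegree ≤ 0 := by
        by_cases hz : g.coeff 0 = 0
        · simp [hz]
        · have := hdeg 0 hz; omega
      have h2 : g.coeff 0 = Polynomial.C ((g.coeff 0).coeff 0) :=
        Polynomial.eq_C_of_natDegree_le_zero hq
      -- get a point
      have hc := hcard 0 le_rfl
      have hA : (A (m + 0)).Nonempty := Finset.card_pos.1 (by omega)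
      obtain ⟨a, ha⟩ := hA
      have := hval 0 le_rfl a ha
      rw [h1, h2] at this ⊢
      simpa using this
  | succ n IH =>
      intro m g A hdeg hcard hval
      -- the slice at z = m is zero
      set q : Polynomial ℂ := g.eval (Polynomial.C ((m : ℕ) : ℂ)) with hqdef
      have hqdeg : q.natDegree ≤ n + 1 := by
        rw [hqdef, Polynomial.eval_eq_sum_range]
        apply Polynomial.natDegree_sum_le_of_forall_le
        intro i _
        refine le_trans Polynomial.natDegree_mul_le ?_
        have h1 : (Polynomial.C ((m : ℕ) : ℂ) : Polynomial ℂ).natDegree = 0 :=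
          Polynomial.natDegree_C _
        have h2 : ((Polynomial.C ((m : ℕ) : ℂ) : Polynomial ℂ) ^ i).natDegree = 0 := by
          rw [← Polynomial.C_pow]; exact Polynomial.natDegree_C _
        by_cases hz : g.coeff i = 0
        · simp [hz]
        · have := hdeg i hz; omega
      have hq0 : q = 0 := by
        apply Polynomial.eq_zero_of_natDegree_lt_card_of_eval_eq_zero' q (A (m + 0))
        · intro a ha
          exact hval 0 (by omega) a (by simpa using ha)
        · have := hcard 0 (by omega)
          omega
      have hroot : (Polynomial.X - Polynomial.C (Polynomial.C ((m : ℕ) : ℂ))) ∣ g := by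
        rw [Polynomial.dvd_iff_isRoot]
        exact hq0
      obtain ⟨h, hgh⟩ := hroot
      -- coefficient recurrence
      have hrec : ∀ i, h.coeff i = g.coeff (i + 1)
          + Polynomial.C ((m : ℕ) : ℂ) * h.coeff (i + 1) := by
        intro i
        have : g.coeff (i + 1)
            = h.coeff i - Polynomial.C ((m : ℕ) : ℂ) * h.coeff (i + 1) := by
          rw [hgh, sub_mul, Polynomial.coeff_sub, Polynomial.coeff_X_mul,
            Polynomial.coeff_C_mul]
        rw [this]; ring
      -- degree bound for h
      have key : ∀ j i, h.natDegree + 1 ≤ i + j →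
          h.coeff i ≠ 0 → (h.coeff i).natDegree + i + 1 ≤ n + 1 := by
        intro j
        induction j with
        | zero =>
            intro i hij hne
            exact absurd (Polynomial.coeff_eq_zero_of_natDegree_lt (by omega)) hne
        | succ j IHj =>
            intro i hij hne
            by_cases hle : h.natDegree + 1 ≤ i + j
            · exact IHj i hle hne
            · by_cases hi : i + 1 ≤ n + 1
              · have hb : (h.coeff i).natDegree ≤ n + 1 - (i + 1) := by
                  rw [hrec i]
                  refine le_trans (Polynomial.natDegree_add_le _ _) (max_le ?_ ?_)
                  · by_cases hz : g.coeff (i + 1) = 0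
                    · simp [hz]
                    · have := hdeg (i + 1) hz; omega
                  · refine le_trans Polynomial.natDegree_mul_le ?_
                    by_cases hz : h.coeff (i + 1) = 0
                    · simp [hz]
                    · have := IHj (i + 1) (by omega) hz
                      simp [Polynomial.natDegree_C]
                      omega
                omega
              · exfalso; apply hne
                rw [hrec i]
                have hz1 : g.coeff (i + 1) = 0 := by
                  by_contra hz; have := hdeg (i + 1) hz; omega
                have hz2 : h.coeff (i + 1) = 0 := by
                  by_contra hz; have := IHj (i + 1) (by omega) hz; omega
                rw [hz1, hz2]; ring
      have hdegh : ∀ i, h.coeff i ≠ 0 → (h.coeff i).natDegree + i ≤ n := by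
        intro i hne
        have := key (h.natDegree + 1) i (by omega) hne
        omega
      -- h vanishes on the shifted rows
      have hvalh : ∀ j, j ≤ n → ∀ a ∈ A (m + 1 + j),
          ((h.eval (Polynomial.C ((m + 1 + j : ℕ) : ℂ))).eval a = 0) := by
        intro j hj a ha
        have hv := hval (j + 1) (by omega) a (by rw [show m + (j + 1) = m + 1 + j by omega]; exact ha)
        rw [show m + (j + 1) = m + 1 + j by omega] at hv
        rw [hgh, Polynomial.eval_mul, Polynomial.eval_sub, Polynomial.eval_X,
          Polynomial.eval_C, Polynomial.eval_mul, Polynomial.eval_sub,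
          Polynomial.eval_C, Polynomial.eval_C] at hv
        have hfac : (((m + 1 + j : ℕ) : ℂ) - ((m : ℕ) : ℂ)) ≠ 0 := by
          have heq : ((m + 1 + j : ℕ) : ℂ) - ((m : ℕ) : ℂ) = ((j + 1 : ℕ) : ℂ) := by
            push_cast; ring
          rw [heq]
          exact Nat.cast_ne_zero.2 (by omega)
        rcases mul_eq_zero.1 hv with h1 | h1
        · exact absurd h1 hfac
        · exact h1
      have hh : h = 0 := by
        apply IH (m + 1) h A hdegh
        · intro j hj
          have := hcard (j + 1) (by omega)
          rw [show m + (j + 1) = m + 1 + j by omega] at this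
          omega
        · exact hvalh
      rw [hgh, hh, mul_zero]

lemma eval_smul_homog {e : ℕ} {f : MvPolynomial (Fin 3) ℂ} (hf : f.IsHomogeneous e)
    (c : ℂ) (v : Fin 3 → ℂ) :
    MvPolynomial.eval (c • v) f = c ^ e * MvPolynomial.eval v f := by
  conv_lhs => rw [f.as_sum]
  conv_rhs => rw [f.as_sum]
  rw [map_sum, map_sum, Finset.mul_sum]
  apply Finset.sum_congr rfl
  intro m hm
  rw [MvPolynomial.eval_monomial, MvPolynomial.eval_monomial]
  have hdeg : ∑ i ∈ m.support, m i = e := by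
    have h1 := hf (MvPolynomial.mem_support_iff.1 hm)
    change (Finsupp.weight fun _ => 1) m = e at h1
    rw [← Finsupp.degree_eq_weight_one] at h1
    exact h1
  have hprod : (m.prod fun n e => (c • v) n ^ e)
      = c ^ e * m.prod fun n e => v n ^ e := by
    rw [Finsupp.prod, Finsupp.prod, ← hdeg, ← Finset.prod_pow_eq_pow_sum, ← Finset.prod_mul_distrib]
    apply Finset.prod_congr rfl
    intro i _
    simp [mul_pow, Pi.smul_apply, smul_eq_mul]
  rw [hprod]; ring

lemma homog_eq_zero {e : ℕ} {f : MvPolynomial (Fin 3) ℂ} (hf : f.IsHomogeneous e)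
    (h : ∀ a c : ℂ, MvPolynomial.eval ![1, a, c] f = 0) : f = 0 := by
  have hX : (MvPolynomial.X 0 : MvPolynomial (Fin 3) ℂ) * f = 0 := by
    apply MvPolynomial.funext
    intro v
    rw [map_mul, MvPolynomial.eval_X, map_zero]
    by_cases hv : v 0 = 0
    · rw [hv, zero_mul]
    · have hveq : v = (v 0) • ![1, v 1 / v 0, v 2 / v 0] := by
        funext i
        fin_cases i <;> simp [Pi.smul_apply, smul_eq_mul] <;> field_simp
      rw [hveq, eval_smul_homog hf, h, mul_zero, mul_zero]
  rcases mul_eq_zero.1 hX with h1 | h1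
  · exact absurd h1 (MvPolynomial.X_ne_zero 0)
  · exact h1

/-- The point of ℙ² attached to a pair of naturals. -/
def pt (q : ℕ × ℕ) : Fin 3 → ℂ := ![1, (q.1 : ℂ), (q.2 : ℂ)]

lemma pt_inj : Function.Injective pt := by
  intro q r h
  have h1 : ((q.1 : ℂ)) = (r.1 : ℂ) := by
    have := congrFun h 1; simpa [pt] using this
  have h2 : ((q.2 : ℂ)) = (r.2 : ℂ) := by
    have := congrFun h 2; simpa [pt] using this
  have e1 : q.1 = r.1 := Nat.cast_injective h1
  have e2 : q.2 = r.2 := Nat.cast_injective h2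
  exact Prod.ext e1 e2

lemma pt_zero (q : ℕ × ℕ) : pt q 0 = 1 := rfl

end CayleyBacharachAux

/-- For `k ≥ 2` and `c₂ ≥ k² + k` there is a set `Z` of `c₂ + k²` pairwise
non-proportional nonzero vectors in `ℂ³` such that no nonzero form of degree `2k - 1`
vanishes on `Z` and, for each `p ∈ Z`, no nonzero form of degree `2k - 3` vanishes on
`Z \ {p}` (the Cayley–Bacharach configuration of Theorem 3.1). -/
theorem exists_cayley_bacharach_configuration (k c₂ : ℕ) (hk : 2 ≤ k)
    (hc : k ^ 2 + k ≤ c₂) :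
    ∃ Z : Finset (Fin 3 → ℂ),
      Z.card = c₂ + k ^ 2 ∧ (∀ v ∈ Z, v ≠ 0) ∧ PairwiseNonProportional Z ∧
      (∀ f : MvPolynomial (Fin 3) ℂ,
        f ∈ MvPolynomial.homogeneousSubmodule (Fin 3) ℂ (2 * k - 1) →
        (∀ v ∈ Z, MvPolynomial.eval v f = 0) → f = 0) ∧
      (∀ p ∈ Z, ∀ f : MvPolynomial (Fin 3) ℂ,
        f ∈ MvPolynomial.homogeneousSubmodule (Fin 3) ℂ (2 * k - 3) →
        (∀ v ∈ Z.erase p, MvPolynomial.eval v f = 0) → f = 0) := by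
  classical
  set T : Finset (ℕ × ℕ) :=
    (Finset.range (2 * k)).biUnion
      (fun b => (Finset.range (2 * k - b)).image (fun a => (a, b))) with hT
  set Ext : Finset (ℕ × ℕ) :=
    (Finset.range (c₂ - (k ^ 2 + k))).image (fun j => (2 * k + j, 0)) with hExt
  set S : Finset (ℕ × ℕ) := T ∪ Ext with hS
  set Z : Finset (Fin 3 → ℂ) := S.image pt with hZ
  have memT : ∀ a b : ℕ, (a, b) ∈ T ↔ a + b < 2 * k := by
    intro a b
    simp only [hT, Finset.mem_biUnion, Finset.mem_range, Finset.mem_image]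
    constructor
    · rintro ⟨b', hb', a', ha', heq⟩
      have e1 : a' = a := congrArg Prod.fst heq
      have e2 : b' = b := congrArg Prod.snd heq
      omega
    · intro h
      exact ⟨b, by omega, a, by omega, rfl⟩
  -- cardinality of T
  have cardT : T.card = 2 * k ^ 2 + k := by
    have hdisj : ∀ b₁ ∈ Finset.range (2 * k), ∀ b₂ ∈ Finset.range (2 * k), b₁ ≠ b₂ →
        Disjoint ((Finset.range (2 * k - b₁)).image (fun a => (a, b₁)))
          ((Finset.range (2 * k - b₂)).image (fun a => (a, b₂))) := by
      intro b₁ _ b₂ _ hne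
      rw [Finset.disjoint_left]
      rintro ⟨x, y⟩ h1 h2
      simp only [Finset.mem_image, Finset.mem_range] at h1 h2
      obtain ⟨a1, _, e1⟩ := h1
      obtain ⟨a2, _, e2⟩ := h2
      have : b₁ = y := congrArg Prod.snd e1
      have : b₂ = y := congrArg Prod.snd e2
      omega
    have hrowcard : ∀ b, ((Finset.range (2 * k - b)).image (fun a => (a, b))).card
        = 2 * k - b := by
      intro b
      rw [Finset.card_image_of_injective _ (fun a a' h => congrArg Prod.fst h),
        Finset.card_range]
    have h1 : T.card = ∑ b ∈ Finset.range (2 * k), (2 * k - b) := by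
      rw [hT, Finset.card_biUnion hdisj]
      exact Finset.sum_congr rfl fun b _ => hrowcard b
    have h2 : ∑ b ∈ Finset.range (2 * k), (2 * k - b)
        = ∑ j ∈ Finset.range (2 * k), (j + 1) := by
      have hrefl := Finset.sum_range_reflect (fun b => 2 * k - b) (2 * k)
      rw [← hrefl]
      apply Finset.sum_congr rfl
      intro j hj
      rw [Finset.mem_range] at hj
      omega
    have h3 : ∑ j ∈ Finset.range (2 * k), (j + 1)
        = (∑ j ∈ Finset.range (2 * k), j) + 2 * k := by
      rw [Finset.sum_add_distrib, Finset.sum_const, Finset.card_range, smul_eq_mul, mul_one]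
    have h4 := Finset.sum_range_id_mul_two (2 * k)
    have h5 : 2 * k * (2 * k - 1) + 2 * k = 4 * (k * k) := by
      have e : 2 * k - 1 + 1 = 2 * k := by omega
      calc 2 * k * (2 * k - 1) + 2 * k = 2 * k * ((2 * k - 1) + 1) := by ring
        _ = 4 * (k * k) := by rw [e]; ring
    have h6 : (∑ j ∈ Finset.range (2 * k), j) * 2 + 2 * k = 4 * (k * k) := by
      rw [h4]; exact h5
    have hkk : k ^ 2 = k * k := by ring
    rw [h1, h2, h3, hkk]
    generalize k * k = K at h6 ⊢
    omega
  have cardExt : Ext.card = c₂ - (k ^ 2 + k) := by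
    rw [hExt, Finset.card_image_of_injective _ (fun a a' h => by
      have := congrArg Prod.fst h; omega), Finset.card_range]
  have hdisjTE : Disjoint T Ext := by
    rw [Finset.disjoint_left]
    rintro ⟨x, y⟩ h1 h2
    simp only [hExt, Finset.mem_image, Finset.mem_range] at h2
    obtain ⟨j, _, e⟩ := h2
    have ex : 2 * k + j = x := congrArg Prod.fst e
    have := (memT x y).1 h1
    omega
  have cardS : S.card = c₂ + k ^ 2 := by
    rw [hS, Finset.card_union_of_disjoint hdisjTE, cardT, cardExt]
    omega
  have cardZ : Z.card = c₂ + k ^ 2 := by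
    rw [hZ, Finset.card_image_of_injective _ pt_inj, cardS]
  have memZ : ∀ v ∈ Z, ∃ q ∈ S, pt q = v := by
    intro v hv
    simpa [hZ, Finset.mem_image] using hv
  have TsubS : T ⊆ S := Finset.subset_union_left
  refine ⟨Z, cardZ, ?_, ?_, ?_, ?_⟩
  · -- nonzero
    intro v hv
    obtain ⟨q, _, rfl⟩ := memZ v hv
    intro h0
    have := congrFun h0 0
    rw [pt_zero] at this
    simpa using this
  · -- pairwise non-proportional
    intro u hu v hv huv c hvc
    obtain ⟨q, _, rfl⟩ := memZ u hu
    obtain ⟨r, _, rfl⟩ := memZ v hv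
    have h0 : pt r 0 = c * pt q 0 := by rw [hvc]; rfl
    rw [pt_zero, pt_zero, mul_one] at h0
    apply huv
    rw [hvc, ← h0, one_smul]
  · -- degree 2k-1 condition
    intro f hf hvan
    have hfh : f.IsHomogeneous (2 * k - 1) := hf
    apply homog_eq_zero hfh
    have hg : deh f = 0 := by
      apply rows_lemma (2 * k - 1) 0 (deh f)
        (fun j => (Finset.range (2 * k - j)).image (fun a : ℕ => (a : ℂ)))
      · exact deh_tdeg hfh.totalDegree_le
      · intro j hj
        rw [Finset.card_image_of_injective _ Nat.cast_injective, Finset.card_range]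
        omega
      · intro j hj a ha
        simp only [Nat.zero_add, Finset.mem_image, Finset.mem_range] at ha
        obtain ⟨a', ha', rfl⟩ := ha
        have hmem : ((a', j) : ℕ × ℕ) ∈ T := (memT a' j).2 (by omega)
        have hz : pt (a', j) ∈ Z := Finset.mem_image_of_mem pt (TsubS hmem)
        have := hvan _ hz
        rw [deh_eval]
        simpa [pt] using this
    intro a c
    rw [← deh_eval, hg]
    simp
  · -- degree 2k-3 condition
    intro p hp f hf hvan
    obtain ⟨q, hqS, rfl⟩ := memZ p hp
    have hfh : f.IsHomogeneous (2 * k - 3) := hf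
    apply homog_eq_zero hfh
    have hg : deh f = 0 := by
      apply rows_lemma (2 * k - 3) 0 (deh f)
        (fun j => if q.2 = j
          then ((Finset.range (2 * k - j)).image (fun a : ℕ => (a : ℂ))).erase ((q.1 : ℂ))
          else (Finset.range (2 * k - j)).image (fun a : ℕ => (a : ℂ)))
      · exact deh_tdeg hfh.totalDegree_le
      · intro j hj
        simp only [Nat.zero_add]
        by_cases hq2 : q.2 = j
        · rw [if_pos hq2]
          have h1 := Finset.pred_card_le_card_erase
            (s := (Finset.range (2 * k - j)).image (fun a : ℕ => (a : ℂ))) (a := (q.1 : ℂ))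
          rw [Finset.card_image_of_injective _ Nat.cast_injective, Finset.card_range] at h1
          omega
        · rw [if_neg hq2, Finset.card_image_of_injective _ Nat.cast_injective,
            Finset.card_range]
          omega
      · intro j hj a ha
        simp only [Nat.zero_add] at ha
        -- extract a' and the non-equality info
        have hmain : ∃ a' : ℕ, a' < 2 * k - j ∧ (a' : ℂ) = a ∧ (q.2 = j → (q.1 : ℂ) ≠ a) := by
          by_cases hq2 : q.2 = j
          · rw [if_pos hq2] at ha
            obtain ⟨hne, hmem⟩ := Finset.mem_erase.1 ha
            simp only [Finset.mem_image, Finset.mem_range] at hmem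
            obtain ⟨a', ha', rfl⟩ := hmem
            exact ⟨a', ha', rfl, fun _ => Ne.symm hne⟩
          · rw [if_neg hq2] at ha
            simp only [Finset.mem_image, Finset.mem_range] at ha
            obtain ⟨a', ha', rfl⟩ := ha
            exact ⟨a', ha', rfl, fun h => absurd h hq2⟩
        obtain ⟨a', ha', rfl, hneq⟩ := hmain
        have hmem : ((a', j) : ℕ × ℕ) ∈ T := (memT a' j).2 (by omega)
        have hptne : pt (a', j) ≠ pt q := by
          intro h
          have := pt_inj h
          have e1 : a' = q.1 := congrArg Prod.fst this
          have e2 : j = q.2 := congrArg Prod.snd this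
          exact hneq e2.symm (by rw [e1])
        have hz : pt (a', j) ∈ Z.erase (pt q) :=
          Finset.mem_erase.2 ⟨hptne, Finset.mem_image_of_mem pt (TsubS hmem)⟩
        have := hvan _ hz
        rw [deh_eval]
        simpa [pt] using this
    intro a c
    rw [← deh_eval, hg]
    simp
end
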